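/- For a function φ that is piecewise polynomial of degree p_n in time on J_n = (t_{n−1}, t_n] with values in L²(Ω), the inverse-type estimate sup_{t∈J_n} ‖φ(t)‖²_{L²} ≤ C (log(p_n + 2) ∫_{t_{n−1}}^{t_n} ‖φ′(t)‖_{L²}² (t − t_{n−1}) dt + ‖φ(t_n)‖²_{L²}) holds with C independent of k_n and p_n. -/

import Mathlib

open MeasureTheory Set
open scoped RealInnerProductSpace

set_option maxHeartbeats 1000000

open Polynomial Polynomial.Chebyshev in
lemma my_T_real_cosh (n : ℕ) (u : ℝ) :
    (T ℝ (n : ℤ)).eval (Real.cosh u) = Real.cosh (n * u) := by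
  have h : (((T ℝ (n:ℤ)).eval (Real.cosh u) : ℝ) : ℂ) = ((Real.cosh (n * u) : ℝ) : ℂ) := by
    rw [complex_ofReal_eval_T, Complex.ofReal_cosh, ← Complex.cos_mul_I,
      T_complex_cos, Complex.ofReal_cosh, ← Complex.cos_mul_I]
    congr 1; push_cast; ring
  exact_mod_cast h

open Polynomial Polynomial.Chebyshev in
lemma my_natDegree_T_le : ∀ n : ℕ, (T ℝ (n : ℤ)).natDegree ≤ n := by
  intro n
  induction n using Nat.strong_induction_on with
  | _ n ih =>
    match n with
    | 0 => simp [T_zero]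
    | 1 => simp [T_one]
    | (m+2) =>
      have h : T ℝ ((m+2 : ℕ) : ℤ) = 2 * X * T ℝ ((m+1 : ℕ) : ℤ) - T ℝ ((m : ℕ) : ℤ) := by
        exact T_add_two ℝ (m : ℤ)
      rw [h]
      refine le_trans (natDegree_sub_le _ _) ?_
      have h1 : (2 * X * T ℝ ((m+1:ℕ):ℤ)).natDegree ≤ m + 2 := by
        refine le_trans natDegree_mul_le ?_
        have h2 : (2 * X : ℝ[X]).natDegree ≤ 1 := le_trans natDegree_mul_le (by simp)
        have h3 := ih (m+1) (by omega)
        omega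
      have h2 := ih m (by omega)
      simp only [max_le_iff]
      exact ⟨h1, by omega⟩

open Polynomial Polynomial.Chebyshev Finset Real in
lemma cheb_growth {p : ℕ} (hp : 1 ≤ p) {Q : Polynomial ℝ} (hQ : Q.natDegree ≤ p)
    {M : ℝ} (hM : ∀ x ∈ Set.Icc (-1:ℝ) 1, |Q.eval x| ≤ M)
    {z : ℝ} (hz1 : 1 < z) :
    |Q.eval z| ≤ ((T ℝ (p:ℤ)).eval z) * M := by
  have hp0 : (p:ℝ) ≠ 0 := by positivity
  set v : ℕ → ℝ := fun j => Real.cos (j * π / p) with hv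
  set s : Finset ℕ := Finset.range (p+1) with hs
  -- nodes are in [0, π] and strictly decreasing
  have hmem : ∀ j ∈ s, (j:ℝ) * π / p ∈ Set.Icc 0 π := by
    intro j hj
    simp only [hs, Finset.mem_range] at hj
    constructor
    · positivity
    · rw [div_le_iff₀ (by positivity)]
      have : (j:ℝ) ≤ p := by exact_mod_cast Nat.lt_succ_iff.mp hj
      nlinarith [Real.pi_pos]
  have hanti : ∀ i ∈ s, ∀ j ∈ s, i < j → v j < v i := by
    intro i hi j hj hij
    refine Real.strictAntiOn_cos (hmem i hi) (hmem j hj) ?_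
    have : (i:ℝ) < (j:ℝ) := by exact_mod_cast hij
    have := Real.pi_pos
    gcongr
  have hinj : Set.InjOn v s := by
    intro i hi j hj hij
    by_contra hne
    rcases Nat.lt_or_ge i j with h | h
    · exact absurd hij (hanti i hi j hj h).ne'
    · exact absurd hij (hanti j hj i hi (by omega)).ne
  have hvle : ∀ j ∈ s, v j ∈ Set.Icc (-1:ℝ) 1 :=
    fun j hj => ⟨Real.neg_one_le_cos _, Real.cos_le_one _⟩
  have hM0 : 0 ≤ M := le_trans (abs_nonneg _) (hM 1 (by norm_num))
  -- interpolation identities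
  have hcard : Q.degree < (#s : WithBot ℕ) := by
    refine lt_of_le_of_lt Q.degree_le_natDegree ?_
    rw [hs, Finset.card_range]
    exact_mod_cast Nat.lt_succ_of_le hQ
  have hTcard : (T ℝ (p:ℤ)).degree < (#s : WithBot ℕ) := by
    refine lt_of_le_of_lt (T ℝ (p:ℤ)).degree_le_natDegree ?_
    rw [hs, Finset.card_range]
    exact_mod_cast Nat.lt_succ_of_le (my_natDegree_T_le p)
  have hQint := Lagrange.eq_interpolate (f := Q) hinj hcard
  have hTint := Lagrange.eq_interpolate (f := T ℝ (p:ℤ)) hinj hTcard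
  -- T values at nodes
  have hTval : ∀ j ∈ s, (T ℝ (p:ℤ)).eval (v j) = (-1)^j := by
    intro j hj
    rw [hv]
    rw [T_real_cos]
    rw [show (p:ℤ) * ((j:ℝ) * π / p) = ((j:ℝ) * π : ℝ) by push_cast; field_simp]
    simpa using Real.cos_nat_mul_pi_sub 0 j
  -- basis sign at z
  have hvlt : ∀ i ∈ s, v i < z := fun i hi => lt_of_le_of_lt (hvle i hi).2 hz1
  have hbasis : ∀ j ∈ s, (-1:ℝ)^j * (Lagrange.basis s v j).eval z
      = |(Lagrange.basis s v j).eval z| := by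
    intro j hj
    have hjlt : j < p + 1 := by simpa [hs] using hj
    have hsplit : s.erase j = Finset.range j ∪ Finset.Ico (j+1) (p+1) := by
      ext i
      simp only [hs, Finset.mem_erase, Finset.mem_range, Finset.mem_union, Finset.mem_Ico]
      omega
    have hdisj : Disjoint (Finset.range j) (Finset.Ico (j+1) (p+1)) := by
      simp only [Finset.disjoint_left, Finset.mem_range, Finset.mem_Ico]
      omega
    have heval : (Lagrange.basis s v j).eval z
        = (∏ i ∈ Finset.range j, ((v j - v i)⁻¹ * (z - v i)))
          * ∏ i ∈ Finset.Ico (j+1) (p+1), ((v j - v i)⁻¹ * (z - v i)) := by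
      rw [Lagrange.basis, hsplit, Finset.prod_union hdisj, eval_mul, eval_prod, eval_prod]
      congr 1 <;> refine Finset.prod_congr rfl fun i _ => by simp [Lagrange.basisDivisor]
    have h2pos : 0 < ∏ i ∈ Finset.Ico (j+1) (p+1), ((v j - v i)⁻¹ * (z - v i)) := by
      apply Finset.prod_pos
      intro i hi
      simp only [Finset.mem_Ico] at hi
      have his : i ∈ s := by simp only [hs, Finset.mem_range]; omega
      have h1 := hanti j hj i his (by omega)
      have h2 := hvlt i his
      exact mul_pos (inv_pos.mpr (by linarith)) (by linarith)
    have h1neg : ∀ i ∈ Finset.range j, 0 < -((v j - v i)⁻¹ * (z - v i)) := by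
      intro i hi
      simp only [Finset.mem_range] at hi
      have hjs : j ∈ s := hj
      simp only [hs, Finset.mem_range] at hjs
      have his : i ∈ s := by simp only [hs, Finset.mem_range]; omega
      have h1 := hanti i his j hj hi
      have h2 := hvlt i his
      have : (v j - v i)⁻¹ < 0 := inv_lt_zero.mpr (by linarith)
      nlinarith
    have hflip : (∏ i ∈ Finset.range j, ((v j - v i)⁻¹ * (z - v i)))
        = (-1:ℝ)^j * ∏ i ∈ Finset.range j, (-((v j - v i)⁻¹ * (z - v i))) := by
      conv_rhs => rw [Finset.prod_congr rfl (fun i (_ : i ∈ Finset.range j) =>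
          (by ring : -((v j - v i)⁻¹ * (z - v i)) = (-1) * ((v j - v i)⁻¹ * (z - v i)))),
        Finset.prod_mul_distrib, Finset.prod_const, Finset.card_range]
      rw [← mul_assoc, ← mul_pow]
      simp
    have hNpos : 0 < (∏ i ∈ Finset.range j, (-((v j - v i)⁻¹ * (z - v i)))) *
        ∏ i ∈ Finset.Ico (j+1) (p+1), ((v j - v i)⁻¹ * (z - v i)) :=
      mul_pos (Finset.prod_pos h1neg) h2pos
    rw [heval, hflip, mul_assoc, abs_mul, ← mul_assoc, ← mul_pow]
    simp [abs_of_pos hNpos]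
  -- interpolation expansion
  have hQz : Q.eval z = ∑ j ∈ s, Q.eval (v j) * (Lagrange.basis s v j).eval z := by
    conv_lhs => rw [hQint]
    simp [Lagrange.interpolate_apply, eval_finset_sum]
  have hTz : (T ℝ (p:ℤ)).eval z = ∑ j ∈ s, (-1:ℝ)^j * (Lagrange.basis s v j).eval z := by
    conv_lhs => rw [hTint]
    rw [Lagrange.interpolate_apply, eval_finset_sum]
    refine Finset.sum_congr rfl fun j hj => ?_
    rw [eval_mul, eval_C, hTval j hj]
  rw [hQz, hTz, Finset.sum_mul]
  refine le_trans (Finset.abs_sum_le_sum_abs _ _) (Finset.sum_le_sum fun j hj => ?_)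
  rw [abs_mul, ← hbasis j hj]
  have h1 : |Q.eval (v j)| ≤ M := hM _ (hvle j hj)
  have h2 : 0 ≤ (-1:ℝ)^j * (Lagrange.basis s v j).eval z := by
    rw [hbasis j hj]; exact abs_nonneg _
  nlinarith [abs_nonneg (Q.eval (v j))]

open Polynomial Polynomial.Chebyshev Real in
lemma cheb_T_le {p : ℕ} {z : ℝ} (h1 : 1 ≤ z) (h2 : z ≤ 1 + 2/((p:ℝ)+1)^2) :
    (T ℝ (p:ℤ)).eval z ≤ Real.cosh 2 := by
  have hp1 : (0:ℝ) < (p:ℝ)+1 := by positivity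
  have hquad : 1 + 2/((p:ℝ)+1)^2 ≤ Real.cosh (2/((p:ℝ)+1)) := by
    set t : ℝ := 2/((p:ℝ)+1) with hts
    have ht : 0 < t := by positivity
    have hch : Real.cosh t = 1 + 2 * Real.sinh (t/2)^2 := by
      rw [show t = 2*(t/2) by ring, Real.cosh_two_mul, Real.cosh_sq]
      ring_nf
    have hsh : t/2 ≤ Real.sinh (t/2) := le_of_lt (Real.self_lt_sinh_iff.mpr (by positivity))
    have key : 1 + 2*(t/2)^2 ≤ Real.cosh t := by rw [hch]; nlinarith
    calc 1 + 2/((p:ℝ)+1)^2 = 1 + 2*(t/2)^2 := by rw [hts]; field_simp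
      _ ≤ _ := key
  obtain ⟨u, hu, hcu⟩ : ∃ u ∈ Set.Icc (0:ℝ) (2/((p:ℝ)+1)), Real.cosh u = z := by
    have hz : z ∈ Set.Icc (Real.cosh 0) (Real.cosh (2/((p:ℝ)+1))) :=
      ⟨by simpa using h1, le_trans h2 hquad⟩
    exact intermediate_value_Icc (by positivity : (0:ℝ) ≤ 2/((p:ℝ)+1))
      Real.continuous_cosh.continuousOn hz
  rw [← hcu, my_T_real_cosh, Real.cosh_le_cosh]
  have hu0 : 0 ≤ u := hu.1
  have hu2 : u ≤ 2/((p:ℝ)+1) := hu.2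
  have hle : (p:ℝ)*u ≤ 2 := by
    calc (p:ℝ)*u ≤ (p:ℝ)*(2/((p:ℝ)+1)) := by
          exact mul_le_mul_of_nonneg_left hu2 (Nat.cast_nonneg p)
      _ ≤ 2 := by rw [mul_comm, div_mul_eq_mul_div, div_le_iff₀ hp1]; nlinarith
  rw [abs_of_nonneg (by positivity), abs_of_nonneg (by norm_num : (0:ℝ) ≤ 2)]
  exact hle

open Polynomial in
lemma cheb_ext {p : ℕ} {Q : Polynomial ℝ} (hQ : Q.natDegree ≤ p) {a b M y : ℝ}
    (hab : a < b) (hM : ∀ x ∈ Set.Icc a b, |Q.eval x| ≤ M)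
    (hy1 : a - (b - a)/((p:ℝ)+1)^2 ≤ y) (hy2 : y ≤ a) :
    |Q.eval y| ≤ Real.cosh 2 * M := by
  have hM0 : 0 ≤ M := le_trans (abs_nonneg _) (hM a ⟨le_refl a, hab.le⟩)
  have hcosh1 : (1:ℝ) ≤ Real.cosh 2 := Real.one_le_cosh 2
  rcases eq_or_lt_of_le hy2 with rfl | hy2'
  · exact le_trans (hM y ⟨le_refl y, hab.le⟩) (by nlinarith)
  rcases Nat.eq_zero_or_pos p with rfl | hp
  · -- constant polynomial
    have hc := Polynomial.eq_C_of_natDegree_le_zero hQ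
    have heq : |Q.eval y| = |Q.eval a| := by rw [hc]; simp
    rw [heq]
    exact le_trans (hM a ⟨le_refl a, hab.le⟩) (by nlinarith)
  -- affine normalization, reversed so that y lands at z > 1 :
  set d : ℝ := (b - a)/2 with hd
  have hd0 : d ≠ 0 := ne_of_gt (by rw [hd]; linarith)
  set S : Polynomial ℝ := Q.comp (Polynomial.C ((a+b)/2) - Polynomial.C d * Polynomial.X) with hS
  have hSeval : ∀ x : ℝ, S.eval x = Q.eval ((a+b)/2 - d * x) := by
    intro x; rw [hS]; simp [Polynomial.eval_comp]
  have hSdeg : S.natDegree ≤ p := by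
    rw [hS, Polynomial.natDegree_comp]
    have : (Polynomial.C ((a+b)/2) - Polynomial.C d * Polynomial.X).natDegree = 1 := by
      rw [sub_eq_add_neg, add_comm, ← neg_mul, ← Polynomial.C_neg]
      exact Polynomial.natDegree_linear (by simpa using hd0)
    rw [this, mul_one]
    exact hQ
  set z : ℝ := ((a+b)/2 - y)/d with hz
  have hzy : (a+b)/2 - d * z = y := by rw [hz]; field_simp; ring
  have hz1 : 1 < z := by
    rw [hz, lt_div_iff₀ (by rw [hd]; linarith)]
    rw [hd]; nlinarith
  have hz2 : z ≤ 1 + 2/((p:ℝ)+1)^2 := by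
    rw [hz, div_le_iff₀ (by rw [hd]; linarith)]
    have heq : (1 + 2/((p:ℝ)+1)^2) * d = (b-a)/2 + (b-a)/((p:ℝ)+1)^2 := by
      rw [hd]; field_simp
    rw [heq]
    linarith
  have hSM : ∀ x ∈ Set.Icc (-1:ℝ) 1, |S.eval x| ≤ M := by
    intro x hx
    rw [hSeval]
    apply hM
    have hd0' : 0 < d := by rw [hd]; linarith
    constructor
    · nlinarith [hx.1, hx.2]
    · nlinarith [hx.1, hx.2]
  have := cheb_growth hp hSdeg hSM hz1
  have hTle := cheb_T_le hz1.le hz2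
  rw [hSeval, hzy] at this
  calc |Q.eval y| ≤ (Polynomial.Chebyshev.T ℝ (p:ℤ)).eval z * M := this
    _ ≤ Real.cosh 2 * M := mul_le_mul_of_nonneg_right hTle hM0

lemma amgm_aux {d w l : ℝ} (hw : 0 < w) (hl : 0 < l) :
    2*|d| ≤ l*(d^2*w) + (1/l)*w⁻¹ := by
  have hu : 0 < l*w := mul_pos hl hw
  have h1 : 0 ≤ (|d| * (l*w) - 1)^2 := sq_nonneg _
  have h3 : (1/l)*w⁻¹ = (l*w)⁻¹ := by
    rw [mul_inv, one_div]
  have h5 : 0 < (l*w)⁻¹ := inv_pos.mpr hu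
  rw [h3]
  have key : l*(d^2*w) + (l*w)⁻¹ - 2*|d| = (|d| * (l*w) - 1)^2 * (l*w)⁻¹ := by
    have h4 : d^2 = |d|^2 := (sq_abs d).symm
    field_simp
    rw [h4]
    ring
  nlinarith [mul_nonneg h1 h5.le]

open MeasureTheory Set in
lemma ftc_bound {t₀ t₁ : ℝ} (Q : Polynomial ℝ) {x : ℝ} (hx0 : t₀ < x) (hx1 : x ≤ t₁)
    {lg : ℝ} (hlg : Real.log ((t₁ - t₀)/(x - t₀)) ≤ lg) (hlg0 : 0 ≤ lg) :
    (Q.eval x)^2 ≤ 2*(Q.eval t₁)^2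
      + 2*lg*(∫ τ in Ioc t₀ t₁, ((Polynomial.derivative Q).eval τ)^2 * (τ - t₀)) := by
  have hx01 : t₀ < t₁ := lt_of_lt_of_le hx0 hx1
  set D : ℝ → ℝ := fun τ => (Polynomial.derivative Q).eval τ with hD
  have hDc : Continuous D := Polynomial.continuous _
  set f : ℝ → ℝ := fun τ => (D τ)^2 * (τ - t₀) with hf
  have hfc : Continuous f := by fun_prop
  set I : ℝ := ∫ τ in Ioc t₀ t₁, f τ with hI
  set A : ℝ := ∫ τ in Ioc x t₁, f τ with hA
  set B : ℝ := ∫ τ in Ioc x t₁, (τ - t₀)⁻¹ with hB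
  set J : ℝ := ∫ τ in Ioc x t₁, |D τ| with hJ
  have hfI : IntegrableOn f (Ioc t₀ t₁) := hfc.integrableOn_Ioc
  have hfA : IntegrableOn f (Ioc x t₁) := hfc.integrableOn_Ioc
  have hJint : IntegrableOn (fun τ => |D τ|) (Ioc x t₁) := (hDc.abs).integrableOn_Ioc
  have hBc : ContinuousOn (fun τ => (τ - t₀)⁻¹) (Icc x t₁) := by
    apply ContinuousOn.inv₀ (by fun_prop)
    intro τ hτ
    have := hτ.1
    intro h0
    nlinarith
  have hBint : IntegrableOn (fun τ => (τ - t₀)⁻¹) (Ioc x t₁) :=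
    (hBc.integrableOn_Icc).mono_set Ioc_subset_Icc_self
  have hI0 : 0 ≤ I := setIntegral_nonneg measurableSet_Ioc
    (fun τ hτ => mul_nonneg (sq_nonneg _) (by linarith [hτ.1]))
  have hA0 : 0 ≤ A := setIntegral_nonneg measurableSet_Ioc
    (fun τ hτ => mul_nonneg (sq_nonneg _) (by linarith [hτ.1, hx0]))
  have hJ0 : 0 ≤ J := setIntegral_nonneg measurableSet_Ioc (fun τ _ => abs_nonneg _)
  have hAI : A ≤ I := by
    apply setIntegral_mono_set hfI ?_ (HasSubset.Subset.eventuallyLE (Ioc_subset_Ioc_left hx0.le))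
    filter_upwards [ae_restrict_mem measurableSet_Ioc] with τ hτ
    exact mul_nonneg (sq_nonneg _) (by linarith [hτ.1])
  -- value of B
  have hBval : B = Real.log ((t₁ - t₀)/(x - t₀)) := by
    rw [hB, ← intervalIntegral.integral_of_le hx1]
    have hcomp : (∫ τ in x..t₁, (τ - t₀)⁻¹) = ∫ u in (x - t₀)..(t₁ - t₀), u⁻¹ :=
      intervalIntegral.integral_comp_sub_right (fun u => u⁻¹) t₀
    rw [hcomp, integral_inv]
    intro hmem
    rw [Set.mem_uIcc] at hmem
    rcases hmem with ⟨h1, _⟩ | ⟨_, h2⟩ <;> nlinarith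
  have hB0 : 0 ≤ B := by
    rw [hBval]
    apply Real.log_nonneg
    rw [le_div_iff₀ (by linarith)]
    linarith
  have hBlg : B ≤ lg := hBval ▸ hlg
  -- FTC
  have hftc : (∫ τ in x..t₁, D τ) = Q.eval t₁ - Q.eval x :=
    intervalIntegral.integral_eq_sub_of_hasDerivAt (fun τ _ => Q.hasDerivAt τ)
      (hDc.intervalIntegrable _ _)
  have habs : |Q.eval x| ≤ |Q.eval t₁| + J := by
    have h1 : |∫ τ in x..t₁, D τ| ≤ J := by
      rw [hJ, ← intervalIntegral.integral_of_le hx1]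
      exact intervalIntegral.abs_integral_le_integral_abs hx1
    have h2 : Q.eval x = Q.eval t₁ - ∫ τ in x..t₁, D τ := by rw [hftc]; ring
    rw [h2]
    calc |Q.eval t₁ - ∫ τ in x..t₁, D τ| ≤ |Q.eval t₁| + |∫ τ in x..t₁, D τ| := abs_sub _ _
      _ ≤ |Q.eval t₁| + J := by linarith
  -- Cauchy–Schwarz via AM–GM
  have hlam : ∀ l : ℝ, 0 < l → 2*J ≤ l*A + (1/l)*B := by
    intro l hl
    have hpt : ∀ τ ∈ Ioc x t₁, 2*|D τ| ≤ l*(f τ) + (1/l)*(τ - t₀)⁻¹ := by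
      intro τ hτ
      exact amgm_aux (by linarith [hτ.1]) hl
    have hmono : (∫ τ in Ioc x t₁, 2*|D τ|)
        ≤ ∫ τ in Ioc x t₁, (l*(f τ) + (1/l)*(τ - t₀)⁻¹) := by
      apply setIntegral_mono_on (hJint.const_mul 2)
        ((hfA.const_mul l).add (hBint.const_mul (1/l))) measurableSet_Ioc hpt
    rw [integral_const_mul] at hmono
    rw [integral_add (hfA.const_mul l) (hBint.const_mul (1/l)), integral_const_mul,
      integral_const_mul] at hmono
    linarith
  have hCS : J^2 ≤ A*B := by
    have key : ∀ ε : ℝ, 0 < ε → J^2 ≤ (A+ε)*(B+ε) := by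
      intro ε hε
      set sA := Real.sqrt (A+ε) with hsA
      set sB := Real.sqrt (B+ε) with hsB
      have hsA0 : 0 < sA := Real.sqrt_pos.mpr (by linarith)
      have hsB0 : 0 < sB := Real.sqrt_pos.mpr (by linarith)
      have hsA2 : sA^2 = A+ε := Real.sq_sqrt (by linarith)
      have hsB2 : sB^2 = B+ε := Real.sq_sqrt (by linarith)
      have h := hlam (sB/sA) (div_pos hsB0 hsA0)
      have e1 : (sB/sA)*A ≤ (sB/sA)*(A+ε) :=
        mul_le_mul_of_nonneg_left (by linarith) (le_of_lt (div_pos hsB0 hsA0))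
      have e2 : (1/(sB/sA))*B ≤ (1/(sB/sA))*(B+ε) :=
        mul_le_mul_of_nonneg_left (by linarith) (by
          have := div_pos hsB0 hsA0
          positivity)
      have e3 : (sB/sA)*(A+ε) = sB*sA := by
        rw [← hsA2]; field_simp
      have e4 : (1/(sB/sA))*(B+ε) = sA*sB := by
        rw [← hsB2]; field_simp
      have hJle : J ≤ sA*sB := by nlinarith
      nlinarith
    by_contra hcon
    push_neg at hcon
    set ε := min 1 ((J^2 - A*B)/(2*(A+B+1))) with hε
    have hd : 0 < (J^2 - A*B)/(2*(A+B+1)) := by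
      apply div_pos (by linarith) (by nlinarith)
    have hε0 : 0 < ε := lt_min (by norm_num) hd
    have hεle : ε ≤ (J^2 - A*B)/(2*(A+B+1)) := min_le_right _ _
    have hε1 : ε ≤ 1 := min_le_left _ _
    have := key ε hε0
    have hexp : (A+ε)*(B+ε) = A*B + ε*(A+B+ε) := by ring
    have hstep : ε*(A+B+ε) ≤ ε*(A+B+1) := by nlinarith
    have hfin : ε*(A+B+1) ≤ (J^2 - A*B)/2 := by
      rw [le_div_iff₀ (by nlinarith : (0:ℝ) < 2*(A+B+1))] at hεle
      nlinarith
    nlinarith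
  -- combine
  have hABlg : A*B ≤ lg*I := by
    calc A*B ≤ A*lg := mul_le_mul_of_nonneg_left hBlg hA0
      _ ≤ I*lg := mul_le_mul_of_nonneg_right hAI hlg0
      _ = lg*I := mul_comm _ _
  have h1 : (Q.eval x)^2 ≤ (|Q.eval t₁| + J)^2 := by
    have := abs_nonneg (Q.eval x)
    nlinarith [sq_abs (Q.eval x), habs, abs_nonneg (Q.eval t₁)]
  have h2 : (|Q.eval t₁| + J)^2 ≤ 2*(Q.eval t₁)^2 + 2*J^2 := by
    nlinarith [sq_nonneg (|Q.eval t₁| - J), sq_abs (Q.eval t₁)]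
  nlinarith

open MeasureTheory Set in
lemma scalar_core {p : ℕ} {t₀ t₁ : ℝ} (h01 : t₀ < t₁) (Q : Polynomial ℝ) (hQ : Q.natDegree ≤ p)
    {x : ℝ} (hx : x ∈ Ioc t₀ t₁) :
    (Q.eval x)^2 ≤ (8 * Real.cosh 2 ^ 2) *
      (Real.log ((p:ℝ)+2) *
        (∫ τ in Ioc t₀ t₁, ((Polynomial.derivative Q).eval τ)^2 * (τ - t₀))
        + (Q.eval t₁)^2) := by
  have hcosh1 : (1:ℝ) ≤ Real.cosh 2 := Real.one_le_cosh 2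
  set k := t₁ - t₀ with hk
  have hk0 : 0 < k := by rw [hk]; linarith
  set c : ℝ := ((p:ℝ)+2)^2 with hc
  have hp0 : (0:ℝ) ≤ (p:ℝ) := Nat.cast_nonneg p
  have hc1 : (4:ℝ) ≤ c := by rw [hc]; nlinarith
  have hc0 : (0:ℝ) < c := by linarith
  set δ := k/c with hδ
  have hδ0 : 0 < δ := div_pos hk0 hc0
  have hδk : δ ≤ k/4 := by
    rw [hδ]
    apply div_le_div_of_nonneg_left hk0.le (by norm_num) hc1
  set m := t₀ + δ with hm
  have hm1 : m < t₁ := by rw [hm]; rw [hk] at hδk; linarith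
  have hm0 : t₀ < m := by rw [hm]; linarith
  set L := Real.log ((p:ℝ)+2) with hL
  have hL0 : 0 < L := Real.log_pos (by nlinarith)
  set I := ∫ τ in Ioc t₀ t₁, ((Polynomial.derivative Q).eval τ)^2 * (τ - t₀) with hI
  have hI0 : 0 ≤ I := setIntegral_nonneg measurableSet_Ioc
    (fun τ hτ => mul_nonneg (sq_nonneg _) (by linarith [hτ.1]))
  have hLI : 0 ≤ L*I := mul_nonneg hL0.le hI0
  have hbig : ∀ y, m ≤ y → y ≤ t₁ → (Q.eval y)^2 ≤ 2*(Q.eval t₁)^2 + 2*(2*L)*I := by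
    intro y hy1 hy2
    have hy0 : t₀ < y := lt_of_lt_of_le hm0 hy1
    have hyδ : δ ≤ y - t₀ := by rw [hm] at hy1; linarith
    refine ftc_bound Q hy0 hy2 ?_ (by linarith)
    have hratio : (t₁ - t₀)/(y - t₀) ≤ c := by
      rw [div_le_iff₀ (by linarith)]
      calc t₁ - t₀ = c*δ := by rw [hδ]; field_simp; exact hk.symm
        _ ≤ c*(y-t₀) := by nlinarith
    calc Real.log ((t₁ - t₀)/(y - t₀)) ≤ Real.log c := by
          rw [Real.log_le_log_iff (div_pos (by linarith) (by linarith)) hc0]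
          exact hratio
      _ = 2*L := by rw [hc, hL, Real.log_pow]; push_cast; ring
  rcases le_or_gt m x with hxm | hxm
  · have hthis := hbig x hxm hx.2
    have hch2 : (1:ℝ) ≤ Real.cosh 2 ^ 2 := by nlinarith
    calc (Q.eval x)^2 ≤ 2*(Q.eval t₁)^2 + 2*(2*L)*I := hthis
      _ ≤ 8 * (L*I + (Q.eval t₁)^2) := by nlinarith [sq_nonneg (Q.eval t₁)]
      _ ≤ 8 * Real.cosh 2 ^ 2 * (L*I + (Q.eval t₁)^2) := by
          nlinarith [sq_nonneg (Q.eval t₁)]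
  · set R := 2*(Q.eval t₁)^2 + 2*(2*L)*I with hR
    have hR0 : 0 ≤ R := by nlinarith [sq_nonneg (Q.eval t₁)]
    have hM : ∀ u ∈ Icc m t₁, |Q.eval u| ≤ Real.sqrt R := by
      intro u hu
      rw [← Real.sqrt_sq_eq_abs]
      exact Real.sqrt_le_sqrt (hbig u hu.1 hu.2)
    have hp1 : (0:ℝ) < ((p:ℝ)+1)^2 := by positivity
    have key : δ*((p:ℝ)+1)^2 ≤ k - δ := by
      have hδc : δ * c = k := by rw [hδ]; field_simp
      have hpc : ((p:ℝ)+1)^2 + 1 ≤ c := by rw [hc]; nlinarith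
      nlinarith [mul_le_mul_of_nonneg_left hpc hδ0.le]
    have hmargin : m - (t₁ - m)/((p:ℝ)+1)^2 ≤ x := by
      have htm : t₁ - m = k - δ := by rw [hm, hk]; ring
      have h2 : δ ≤ (t₁ - m)/((p:ℝ)+1)^2 := by
        rw [le_div_iff₀ hp1, htm]
        exact key
      have := hx.1
      linarith
    have hext := cheb_ext hQ hm1 hM hmargin hxm.le
    have hsq : (Q.eval x)^2 ≤ (Real.cosh 2)^2 * R := by
      have h1 : |Q.eval x|^2 ≤ (Real.cosh 2 * Real.sqrt R)^2 := by
        apply sq_le_sq' _ hext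
        have : 0 ≤ Real.cosh 2 * Real.sqrt R := by positivity
        linarith [abs_nonneg (Q.eval x)]
      rw [sq_abs] at h1
      calc (Q.eval x)^2 ≤ (Real.cosh 2 * Real.sqrt R)^2 := h1
        _ = (Real.cosh 2)^2 * R := by
            rw [mul_pow, Real.sq_sqrt hR0]
    rw [hR] at hsq
    have hch2 : (1:ℝ) ≤ Real.cosh 2 ^ 2 := by nlinarith
    have hc20 : (0:ℝ) ≤ Real.cosh 2 ^ 2 := by linarith
    calc (Q.eval x)^2 ≤ Real.cosh 2 ^2 * (2*(Q.eval t₁)^2 + 2*(2*L)*I) := hsq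
      _ ≤ Real.cosh 2 ^2 * (8 * (L*I + (Q.eval t₁)^2)) := by
          apply mul_le_mul_of_nonneg_left _ hc20
          nlinarith [sq_nonneg (Q.eval t₁)]
      _ = 8 * Real.cosh 2 ^ 2 * (L*I + (Q.eval t₁)^2) := by ring


/-- Polynomial inverse-type estimate (Schötzau–Schwab): there is a constant `C`,
independent of the time step and of the polynomial degree, such that for every
`L²(Ω)`-valued polynomial `φ` of degree ≤ p on the interval `J = (t₀, t₁]`,
`sup_{t ∈ J} ‖φ(t)‖² ≤ C (log(p+2) ∫_J ‖φ′(t)‖² (t − t₀) dt + ‖φ(t₁)‖²)`. -/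
theorem dg_inverse_estimate (H : Type*) [NormedAddCommGroup H] [InnerProductSpace ℝ H]
    [CompleteSpace H] :
    ∃ C : ℝ, 0 < C ∧ ∀ (p : ℕ) (t₀ t₁ : ℝ), t₀ < t₁ →
      ∀ φ φ' : ℝ → H,
        (∃ c : ℕ → H, ∀ s, φ s = ∑ i ∈ Finset.range (p + 1), s ^ i • c i) →
        (∀ s : ℝ, HasDerivAt φ (φ' s) s) →
        ⨆ s ∈ Ioc t₀ t₁, ‖φ s‖ ^ 2 ≤
          C * (Real.log (p + 2) * (∫ s in Ioc t₀ t₁, ‖φ' s‖ ^ 2 * (s - t₀)) +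
            ‖φ t₁‖ ^ 2) := by
  refine ⟨8 * Real.cosh 2 ^ 2, by nlinarith [Real.one_le_cosh 2], ?_⟩
  intro p t₀ t₁ ht φ φ' hpoly hderiv
  obtain ⟨c, hc⟩ := hpoly
  have hgd : ∀ y : ℝ, HasDerivAt φ
      (∑ i ∈ Finset.range (p+1), ((i:ℝ) * y^(i-1)) • c i) y := by
    intro y
    have h1 : HasDerivAt (fun s : ℝ => ∑ i ∈ Finset.range (p+1), s ^ i • c i)
        (∑ i ∈ Finset.range (p+1), ((i:ℝ) * y^(i-1)) • c i) y := by
      apply HasDerivAt.fun_sum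
      intro i _
      simpa using (hasDerivAt_pow i y).smul_const (c i)
    have hfun : φ = fun s => ∑ i ∈ Finset.range (p+1), s ^ i • c i := funext hc
    rw [hfun]
    exact h1
  have hφ' : ∀ y, φ' y = ∑ i ∈ Finset.range (p+1), ((i:ℝ) * y^(i-1)) • c i :=
    fun y => (hderiv y).unique (hgd y)
  have hφ'c : Continuous φ' := by
    have : φ' = fun y => ∑ i ∈ Finset.range (p+1), ((i:ℝ) * y^(i-1)) • c i := funext hφ'
    rw [this]
    fun_prop
  have hL0 : (0:ℝ) ≤ Real.log ((p:ℝ)+2) := Real.log_nonneg (by linarith [Nat.cast_nonneg (α := ℝ) p])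
  have hIint : IntegrableOn (fun s => ‖φ' s‖^2 * (s - t₀)) (Ioc t₀ t₁) :=
    Continuous.integrableOn_Ioc (by fun_prop)
  have hI0 : (0:ℝ) ≤ ∫ s in Ioc t₀ t₁, ‖φ' s‖^2 * (s - t₀) :=
    setIntegral_nonneg measurableSet_Ioc
      (fun τ hτ => mul_nonneg (by positivity) (by linarith [hτ.1]))
  have hRHS : (0:ℝ) ≤ 8 * Real.cosh 2 ^ 2 *
      (Real.log ((p:ℝ)+2) * (∫ s in Ioc t₀ t₁, ‖φ' s‖^2 * (s - t₀)) + ‖φ t₁‖^2) := by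
    nlinarith [mul_nonneg hL0 hI0, sq_nonneg ‖φ t₁‖, Real.one_le_cosh 2]
  have hmain : ∀ s ∈ Ioc t₀ t₁, ‖φ s‖^2 ≤ 8 * Real.cosh 2 ^ 2 *
      (Real.log ((p:ℝ)+2) * (∫ u in Ioc t₀ t₁, ‖φ' u‖^2 * (u - t₀)) + ‖φ t₁‖^2) := by
    intro s hs
    by_cases hv : φ s = 0
    · rw [hv]; simpa using hRHS
    set v := φ s with hvdef
    set Q : Polynomial ℝ := ∑ i ∈ Finset.range (p+1),
      Polynomial.C ((inner ℝ (c i) (v) : ℝ)) * Polynomial.X ^ i with hQdef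
    have hQeval : ∀ y, Q.eval y = (inner ℝ (φ y) (v) : ℝ) := by
      intro y
      rw [hc y, hQdef, Polynomial.eval_finset_sum, sum_inner]
      refine Finset.sum_congr rfl fun i _ => ?_
      rw [Polynomial.eval_mul, Polynomial.eval_C, Polynomial.eval_pow, Polynomial.eval_X,
        real_inner_smul_left]
      ring
    have hQdeg : Q.natDegree ≤ p := by
      rw [hQdef]
      apply Polynomial.natDegree_sum_le_of_forall_le
      intro i hi
      refine le_trans (Polynomial.natDegree_C_mul_le _ _) ?_
      simpa using Finset.mem_range_succ_iff.mp hi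
    have hQder : ∀ y, (Polynomial.derivative Q).eval y = (inner ℝ (φ' y) (v) : ℝ) := by
      intro y
      have h1 : HasDerivAt (fun u => Q.eval u) ((Polynomial.derivative Q).eval y) y :=
        Q.hasDerivAt y
      have h2 : HasDerivAt (fun u : ℝ => (inner ℝ (φ u) (v) : ℝ)) ((inner ℝ (φ' y) (v) : ℝ)) y := by
        simpa using HasDerivAt.inner ℝ (hderiv y) (hasDerivAt_const y v)
      have hfun : (fun u => Q.eval u) = fun u : ℝ => (inner ℝ (φ u) (v) : ℝ) := funext hQeval
      rw [hfun] at h1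
      exact h1.unique h2
    have hQint : (∫ τ in Ioc t₀ t₁, ((Polynomial.derivative Q).eval τ)^2 * (τ - t₀))
        ≤ ‖v‖^2 * ∫ u in Ioc t₀ t₁, ‖φ' u‖^2 * (u - t₀) := by
      have heq : ‖v‖^2 * (∫ u in Ioc t₀ t₁, ‖φ' u‖^2 * (u - t₀))
          = ∫ τ in Ioc t₀ t₁, ‖v‖^2 * (‖φ' τ‖^2 * (τ - t₀)) := (integral_const_mul _ _).symm
      rw [heq]
      apply setIntegral_mono_on
      · exact Continuous.integrableOn_Ioc (by fun_prop)
      · exact hIint.const_mul _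
      · exact measurableSet_Ioc
      · intro τ hτ
        rw [hQder]
        have h4 : ((inner ℝ (φ' τ) (v) : ℝ))^2 ≤ ‖φ' τ‖^2 * ‖v‖^2 := by
          nlinarith [abs_real_inner_le_norm (φ' τ) v, norm_nonneg (φ' τ), norm_nonneg v,
            sq_abs ((inner ℝ (φ' τ) (v) : ℝ)), abs_nonneg ((inner ℝ (φ' τ) (v) : ℝ))]
        have h5 : 0 ≤ τ - t₀ := by linarith [hτ.1]
        nlinarith
    have hQx := scalar_core ht Q hQdeg hs
    rw [hQeval s, ← hvdef, real_inner_self_eq_norm_sq] at hQx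
    have hQt1 : (Q.eval t₁)^2 ≤ ‖φ t₁‖^2 * ‖v‖^2 := by
      rw [hQeval]
      nlinarith [abs_real_inner_le_norm (φ t₁) v, norm_nonneg (φ t₁), norm_nonneg v,
        sq_abs ((inner ℝ (φ t₁) (v) : ℝ)), abs_nonneg ((inner ℝ (φ t₁) (v) : ℝ))]
    have hv2 : 0 < ‖v‖^2 := pow_pos (norm_pos_iff.mpr hv) 2
    have hc8 : (0:ℝ) ≤ 8 * Real.cosh 2 ^ 2 := by nlinarith [Real.one_le_cosh 2]
    have hfinal : (‖v‖^2)^2 ≤ (8 * Real.cosh 2 ^ 2) *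
        ((Real.log ((p:ℝ)+2) * (∫ u in Ioc t₀ t₁, ‖φ' u‖^2 * (u - t₀)) + ‖φ t₁‖^2) * ‖v‖^2) := by
      refine le_trans hQx ?_
      apply mul_le_mul_of_nonneg_left _ hc8
      have h6 := mul_le_mul_of_nonneg_left hQint hL0
      have h7 : Real.log ((p:ℝ)+2) * (‖v‖^2 * ∫ u in Ioc t₀ t₁, ‖φ' u‖^2 * (u - t₀))
          = (Real.log ((p:ℝ)+2) * ∫ u in Ioc t₀ t₁, ‖φ' u‖^2 * (u - t₀)) * ‖v‖^2 := by ring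
      rw [h7] at h6
      nlinarith [hQt1]
    nlinarith [hfinal, hv2, mul_pos hv2 hv2]
  have hcast : ((p:ℝ)+2) = ((p:ℝ) + 2) := rfl
  refine Real.iSup_le (fun s => Real.iSup_le (fun hs => ?_) hRHS) hRHS
  exact hmain s hs
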